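/- Let α : A⁺ → S be a morphism to a finite semigroup S. In any word w ∈ A⁺, among any |S| + 1 consecutive positions, at least one is distinguished, where a position x is distinguished if α(u_x)·e = α(u_x) for some idempotent e, with u_x the infix of length at most |S| of w ending at x. -/

import Mathlib

/-- The value of a nonempty word under the letter map `α : A → S`,
`none` on the empty word. -/
def evalWord? {A S : Type*} [Semigroup S] (α : A → S) : List A → Option S
  | [] => none
  | a :: r => some (r.foldl (fun acc b => acc * α b) (α a))

/-- `windowAt c w x` is the infix of `w` consisting of positions
`max(0, x − c + 1)` through `x` (0-indexed), i.e. the factor of length at most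
`c` of `w` ending at position `x`. -/
def windowAt {A : Type*} (c : ℕ) (w : List A) (x : ℕ) : List A :=
  (w.take (x + 1)).drop (x + 1 - c)

/-- Position `x` of `w` is distinguished if `α(u_x)·e = α(u_x)` for some
idempotent `e`, where `u_x` is the factor of length at most `c = |S|` of `w`
ending at `x`. -/
def Distinguished {A S : Type*} [Semigroup S] (c : ℕ) (α : A → S)
    (w : List A) (x : ℕ) : Prop :=
  ∃ e v : S, e * e = e ∧ evalWord? α (windowAt c w x) = some v ∧ v * e = v

/-! ### Auxiliary lemmas -/

section Aux

variable {A S : Type*} [Semigroup S] (α : A → S)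

private lemma foldl_mul_aux (r : List A) (s t : S) :
    r.foldl (fun acc b => acc * α b) (s * t) =
      s * r.foldl (fun acc b => acc * α b) t := by
  induction r generalizing t with
  | nil => rfl
  | cons b r ih =>
    simp only [List.foldl_cons]
    rw [mul_assoc, ih]

lemma evalWord?_append_aux (l₁ l₂ : List A) (v₁ v₂ : S)
    (h₁ : evalWord? α l₁ = some v₁) (h₂ : evalWord? α l₂ = some v₂) :
    evalWord? α (l₁ ++ l₂) = some (v₁ * v₂) := by
  cases l₁ with
  | nil => simp [evalWord?] at h₁
  | cons a r =>
    cases l₂ with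
    | nil => simp [evalWord?] at h₂
    | cons b r' =>
      simp only [evalWord?, Option.some.injEq] at h₁ h₂
      subst h₁; subst h₂
      show evalWord? α (a :: (r ++ b :: r')) = _
      simp only [evalWord?, List.foldl_append, List.foldl_cons, Option.some.injEq]
      rw [foldl_mul_aux]

lemma evalWord?_some_aux (l : List A) (h : l ≠ []) :
    ∃ v, evalWord? α l = some v := by
  cases l with
  | nil => exact absurd rfl h
  | cons a r => exact ⟨_, rfl⟩

/-- `qpowAux q n = q ^ (n+1)` in a semigroup. -/
def qpowAux {S : Type*} [Semigroup S] (q : S) : ℕ → S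
  | 0 => q
  | n + 1 => qpowAux q n * q

lemma qpowAux_add {S : Type*} [Semigroup S] (q : S) (m n : ℕ) :
    qpowAux q (m + n + 1) = qpowAux q m * qpowAux q n := by
  induction n with
  | zero => rfl
  | succ n ih =>
    show qpowAux q (m + n + 1) * q = _
    rw [ih, mul_assoc]
    rfl

lemma qpowAux_shift {S : Type*} [Semigroup S] {q : S} {a b : ℕ}
    (h : qpowAux q a = qpowAux q b) (j : ℕ) :
    qpowAux q (a + j) = qpowAux q (b + j) := by
  cases j with
  | zero => exact h
  | succ j =>
    show qpowAux q (a + j + 1) = qpowAux q (b + j + 1)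
    rw [qpowAux_add, qpowAux_add, h]

lemma qpowAux_stab {S : Type*} [Semigroup S] {q : S} {m d : ℕ}
    (h : qpowAux q m = qpowAux q (m + d + 1)) :
    ∀ k i, qpowAux q (m + i + k * (d + 1)) = qpowAux q (m + i) := by
  intro k
  induction k with
  | zero => intro i; simp
  | succ k ih =>
    intro i
    have e1 : m + i + (k + 1) * (d + 1) = m + (i + (d + 1)) + k * (d + 1) := by ring
    rw [e1, ih (i + (d + 1))]
    have e2 : m + (i + (d + 1)) = (m + d + 1) + i := by ring
    rw [e2]
    exact (qpowAux_shift h.symm i).symm ▸ (qpowAux_shift h.symm i)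

lemma exists_idem_aux {S : Type*} [Semigroup S] [Fintype S] (t q : S)
    (h : t * q = t) : ∃ e : S, e * e = e ∧ t * e = t := by
  obtain ⟨k₁, k₂, hne, hfe⟩ := Fintype.exists_ne_map_eq_of_card_lt
    (fun n : Fin (Fintype.card S + 1) => qpowAux q (n : ℕ)) (by simp)
  have hv : (k₁ : ℕ) ≠ (k₂ : ℕ) := fun hh => hne (Fin.ext hh)
  obtain ⟨m, d, hmd⟩ : ∃ m d : ℕ, qpowAux q m = qpowAux q (m + d + 1) := by
    rcases hv.lt_or_gt with h' | h'
    · refine ⟨k₁, (k₂ : ℕ) - k₁ - 1, ?_⟩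
      rw [hfe]; congr 1; omega
    · refine ⟨k₂, (k₁ : ℕ) - k₂ - 1, ?_⟩
      rw [← hfe]; congr 1; omega
  have ht : ∀ n, t * qpowAux q n = t := by
    intro n
    induction n with
    | zero => exact h
    | succ n ih =>
      show t * (qpowAux q n * q) = t
      rw [← mul_assoc, ih, h]
  refine ⟨qpowAux q (m + d * (m + 1)), ?_, ht _⟩
  have h1 : qpowAux q (m + d * (m + 1)) * qpowAux q (m + d * (m + 1)) =
      qpowAux q ((m + d * (m + 1)) + (m + d * (m + 1)) + 1) :=
    (qpowAux_add q _ _).symm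
  rw [h1]
  have h2 : (m + d * (m + 1)) + (m + d * (m + 1)) + 1 =
      m + (d * (m + 1)) + (m + 1) * (d + 1) := by ring
  rw [h2, qpowAux_stab hmd (m + 1) (d * (m + 1))]

lemma exists_lt_eval_eq_aux {A S : Type*} [Semigroup S] [Fintype S]
    (α : A → S) (a : A) (r : List A) :
    ∃ i j : ℕ, i < j ∧ j ≤ Fintype.card S ∧
      (r.take i).foldl (fun acc b => acc * α b) (α a) =
        (r.take j).foldl (fun acc b => acc * α b) (α a) := by
  obtain ⟨k₁, k₂, hne, hfe⟩ := Fintype.exists_ne_map_eq_of_card_lt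
    (fun k : Fin (Fintype.card S + 1) =>
      (r.take (k : ℕ)).foldl (fun acc b => acc * α b) (α a)) (by simp)
  have h1 := k₁.isLt
  have h2 := k₂.isLt
  have hv : (k₁ : ℕ) ≠ (k₂ : ℕ) := fun hh => hne (Fin.ext hh)
  rcases hv.lt_or_gt with h' | h'
  · exact ⟨k₁, k₂, h', by omega, hfe⟩
  · exact ⟨k₂, k₁, h', by omega, hfe.symm⟩

end Aux

/-- In any word over a finite semigroup morphism, among any `|S| + 1`
consecutive positions at least one is distinguished. -/
theorem stmt16 (A S : Type*) [Semigroup S] [Fintype S] (α : A → S)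
    (w : List A) (x : ℕ) (h : x + Fintype.card S < w.length) :
    ∃ y, x ≤ y ∧ y ≤ x + Fintype.card S ∧
      Distinguished (Fintype.card S) α w y := by
  set c := Fintype.card S with hc
  have hx : x < w.length := by omega
  obtain ⟨a, r, hw'⟩ : ∃ a r, w.drop x = a :: r := by
    rcases hd : w.drop x with _ | ⟨a, r⟩
    · exfalso
      have h0 : (w.drop x).length = w.length - x := List.length_drop
      rw [hd] at h0
      simp at h0
      omega
    · exact ⟨a, r, rfl⟩
  have hr : c ≤ r.length := by
    have h0 : (w.drop x).length = w.length - x := List.length_drop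
    rw [hw'] at h0
    simp at h0
    omega
  obtain ⟨i, j, hij, hjc, hfij⟩ := exists_lt_eval_eq_aux α a r
  rw [← hc] at hjc
  -- the segment decomposition
  set mid : List A := (r.drop i).take (j - i) with hmid
  have htake : r.take j = r.take i ++ mid := by
    have e0 : j = i + (j - i) := by omega
    rw [e0, List.take_add]
  have hmidne : mid ≠ [] := by
    apply List.ne_nil_of_length_pos
    rw [hmid]
    simp only [List.length_take, List.length_drop]
    omega
  obtain ⟨q, hq⟩ := evalWord?_some_aux α mid hmidne
  set t : S := (r.take i).foldl (fun acc b => acc * α b) (α a) with htdef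
  have htq : t * q = t := by
    have hA : evalWord? α ((a :: r.take i) ++ mid) = some (t * q) :=
      evalWord?_append_aux α _ _ _ _ rfl hq
    rw [List.cons_append, ← htake] at hA
    have hB : evalWord? α (a :: r.take j) =
        some ((r.take j).foldl (fun acc b => acc * α b) (α a)) := rfl
    rw [hA] at hB
    have := Option.some_inj.mp hB
    rw [← hfij] at this
    exact this
  obtain ⟨e, he, hte⟩ := exists_idem_aux t q htq
  -- the window at position x + i
  have hwin : windowAt c w (x + i) =
      ((w.take x).drop (x + i + 1 - c)) ++ (a :: r.take i) := by
    unfold windowAt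
    have e1 : w.take (x + i + 1) = w.take x ++ (a :: r.take i) := by
      have h0 : w.take (x + (i + 1)) = w.take x ++ (w.drop x).take (i + 1) := List.take_add
      rw [hw'] at h0
      have e0 : x + i + 1 = x + (i + 1) := by omega
      rw [e0, h0]
      rfl
    rw [e1, List.drop_append_of_le_length]
    rw [List.length_take]
    omega
  refine ⟨x + i, Nat.le_add_right x i, by omega, ?_⟩
  rcases hpre : (w.take x).drop (x + i + 1 - c) with _ | ⟨p0, ps⟩
  · refine ⟨e, t, he, ?_, hte⟩
    rw [hwin, hpre, List.nil_append]
    rfl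
  · refine ⟨e, ps.foldl (fun acc b => acc * α b) (α p0) * t, he, ?_, ?_⟩
    · rw [hwin, hpre]
      exact evalWord?_append_aux α _ _ _ _ rfl rfl
    · rw [mul_assoc, hte]
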